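/- arXiv:2509.24125 — 3 statements merged into one kernel-verified Lean document; each statement's English description precedes it below -/
import Mathlib

section
/- For every non-identity n×n permutation matrix P, every depth k, and every choice of attention weight matrices A^{(1)}, …, A^{(k)}, there exists a target matrix Y ∈ ℝ^{n×n} such that the k-layer disentangled causal transformer on input X = [P; P·Y] (stacked vertically, with positional one-hot encodings appended) does not contain Y as any contiguous n-row block of any column-block of its final residual stream. -/
open Matrix

noncomputable def permMatrix {n : ℕ} (π : Equiv.Perm (Fin n)) : Matrix (Fin n) (Fin n) ℝ :=
  Matrix.of fun i j => if π i = j then (1 : ℝ) else 0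

noncomputable def maskedAttn {T m : ℕ} (A : Matrix (Fin m) (Fin m) ℝ)
    (h : Matrix (Fin T) (Fin m) ℝ) : Matrix (Fin T) (Fin m) ℝ :=
  Matrix.of fun i k =>
    (∑ j : Fin T, if j ≤ i then Real.exp ((h * A * hᵀ) i j) * h j k else 0) /
    (∑ j : Fin T, if j ≤ i then Real.exp ((h * A * hᵀ) i j) else 0)

def dwidth (d T : ℕ) : ℕ → ℕ
  | 0 => d + T
  | ℓ + 1 => dwidth d T ℓ + dwidth d T ℓ

noncomputable def resid {d T : ℕ} (X : Matrix (Fin T) (Fin d) ℝ)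
    (A : (ℓ : ℕ) → Matrix (Fin (dwidth d T ℓ)) (Fin (dwidth d T ℓ)) ℝ) :
    (ℓ : ℕ) → Matrix (Fin T) (Fin (dwidth d T ℓ)) ℝ
  | 0 => Matrix.of fun i =>
      Fin.append (X i) (fun j : Fin T => if (i : ℕ) = (j : ℕ) then (1 : ℝ) else 0)
  | ℓ + 1 => Matrix.of fun i =>
      Fin.append (resid X A ℓ i) (maskedAttn (A ℓ) (resid X A ℓ) i)

/-- Vertical stacking `[P; Q]` of two `n`-column matrices. -/
def stack {n : ℕ} (P Q : Matrix (Fin n) (Fin n) ℝ) : Matrix (Fin (n + n)) (Fin n) ℝ :=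
  Matrix.of fun i => Fin.addCases (motive := fun _ => Fin n → ℝ) (fun i₁ => P i₁) (fun i₂ => Q i₂) i

set_option maxHeartbeats 1000000

lemma maskedAttn_row_congr {T m : ℕ} (A : Matrix (Fin m) (Fin m) ℝ)
    (h h' : Matrix (Fin T) (Fin m) ℝ) (i : Fin T)
    (hrows : ∀ j, j ≤ i → h j = h' j) :
    ∀ kk, maskedAttn A h i kk = maskedAttn A h' i kk := by
  have hQ : ∀ j, j ≤ i → (h * A * hᵀ) i j = (h' * A * h'ᵀ) i j := by
    intro j hj
    simp only [Matrix.mul_apply, Matrix.transpose_apply, hrows i le_rfl, hrows j hj]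
  intro kk
  simp only [maskedAttn, Matrix.of_apply]
  congr 1
  · refine Finset.sum_congr rfl fun j _ => ?_
    by_cases hj : j ≤ i
    · simp only [hj, if_true, hQ j hj, hrows j hj]
    · simp [hj]
  · refine Finset.sum_congr rfl fun j _ => ?_
    by_cases hj : j ≤ i
    · simp only [hj, if_true, hQ j hj]
    · simp [hj]

lemma resid_causal {d T : ℕ} (X X' : Matrix (Fin T) (Fin d) ℝ)
    (A : (ℓ : ℕ) → Matrix (Fin (dwidth d T ℓ)) (Fin (dwidth d T ℓ)) ℝ)
    (ℓ : ℕ) (i : Fin T) (hX : ∀ i' ≤ i, X i' = X' i') :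
    ∀ i' ≤ i, resid X A ℓ i' = resid X' A ℓ i' := by
  induction ℓ with
  | zero =>
    intro i' hi'
    funext j
    simp only [resid, Matrix.of_apply]
    show Fin.append (X i') (fun j : Fin T => if (i' : ℕ) = (j : ℕ) then (1 : ℝ) else 0)
        (j : Fin (d + T)) =
      Fin.append (X' i') (fun j : Fin T => if (i' : ℕ) = (j : ℕ) then (1 : ℝ) else 0)
        (j : Fin (d + T))
    rw [hX i' hi']
  | succ ℓ ih =>
    intro i' hi'
    funext j
    simp only [resid, Matrix.of_apply]
    show Fin.append (resid X A ℓ i') (maskedAttn (A ℓ) (resid X A ℓ) i') j =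
      Fin.append (resid X' A ℓ i') (maskedAttn (A ℓ) (resid X' A ℓ) i') j
    rw [ih i' hi']
    congr 1
    funext kk
    exact maskedAttn_row_congr (A ℓ) (resid X A ℓ) (resid X' A ℓ) i'
      (fun j hj => ih j (hj.trans hi')) kk

lemma stack_left {n : ℕ} (P Q : Matrix (Fin n) (Fin n) ℝ) (i : Fin n) :
    stack P Q (Fin.castAdd n i) = P i := by
  show Fin.addCases (motive := fun _ => Fin n → ℝ) _ _ (Fin.castAdd n i) = P i
  exact Fin.addCases_left i

lemma stack_right {n : ℕ} (P Q : Matrix (Fin n) (Fin n) ℝ) (i : Fin n) :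
    stack P Q (Fin.natAdd n i) = Q i := by
  show Fin.addCases (motive := fun _ => Fin n → ℝ) _ _ (Fin.natAdd n i) = Q i
  exact Fin.addCases_right i

lemma permMatrix_mul_apply {n : ℕ} (π : Equiv.Perm (Fin n)) (Y : Matrix (Fin n) (Fin n) ℝ)
    (i j : Fin n) : (permMatrix π * Y) i j = Y (π i) j := by
  simp [Matrix.mul_apply, permMatrix, ite_mul, Finset.sum_ite_eq]

/-- Impossibility of inverse permutation learning: for every non-identity permutation `P`,
every depth `k` and all weight matrices, there is a target `Y` such that the disentangled
causal transformer on input `X = [P; P·Y]` does not output `Y` as any contiguous `n × n`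
block of its final residual stream. -/
theorem stmt6 {n : ℕ} (π : Equiv.Perm (Fin n)) (hπ : π ≠ Equiv.refl (Fin n)) (k : ℕ)
    (A : (ℓ : ℕ) → Matrix (Fin (dwidth n (n + n) ℓ)) (Fin (dwidth n (n + n) ℓ)) ℝ) :
    ∃ Y : Matrix (Fin n) (Fin n) ℝ,
      ¬ ∃ (r c : ℕ) (hr : r + n ≤ n + n) (hc : c + n ≤ dwidth n (n + n) k),
        ∀ a b : Fin n,
          resid (stack (permMatrix π) (permMatrix π * Y)) A k
              ⟨r + a.val, by have := a.isLt; omega⟩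
              ⟨c + b.val, by have := b.isLt; omega⟩ = Y a b := by
  -- n is positive
  have hn : 0 < n := by
    rcases Nat.eq_zero_or_pos n with h | h
    · subst h; exact absurd (Equiv.ext fun x => x.elim0) hπ
    · exact h
  -- find c₀ with π c₀ < c₀
  have hex : ∃ x, π x ≠ x := by
    by_contra h
    push_neg at h
    exact hπ (Equiv.ext h)
  obtain ⟨x₀, hx₀⟩ := hex
  set F : Finset (Fin n) := Finset.univ.filter (fun y => π y ≠ y) with hF
  have hFne : F.Nonempty := ⟨x₀, by simp [hF, hx₀]⟩
  set c₀ : Fin n := F.max' hFne with hc₀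
  have hc₀mem : π c₀ ≠ c₀ := by
    have := F.max'_mem hFne
    simpa [hF] using this
  have hdesc : π c₀ < c₀ := by
    by_contra h
    have hlt : c₀ < π c₀ := lt_of_le_of_ne (not_lt.mp h) (Ne.symm hc₀mem)
    have hfix : π (π c₀) = π c₀ := by
      by_contra hne
      have : π c₀ ∈ F := by simp [hF, hne]
      exact absurd (F.le_max' _ this) (not_le.mpr hlt)
    exact hc₀mem (π.injective hfix)
  set a : Fin n := π c₀ with ha
  -- reference input with Y = 0
  set P := permMatrix π with hP
  set X0 : Matrix (Fin (n + n)) (Fin n) ℝ := stack P (P * 0) with hX0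
  set S : Finset ℝ :=
    Finset.image (fun p : Fin (n + n) × Fin (dwidth n (n + n) k) => resid X0 A k p.1 p.2)
      Finset.univ with hS
  obtain ⟨t, ht⟩ := Infinite.exists_notMem_finset S
  set Y : Matrix (Fin n) (Fin n) ℝ := Matrix.of fun i _ => if i = a then t else 0 with hY
  refine ⟨Y, ?_⟩
  rintro ⟨r, cc, hr, hc, hblock⟩
  have hrn : r ≤ n := by omega
  have hrowlt : r + (a : ℕ) < n + n := by have := a.isLt; omega
  set irow : Fin (n + n) := ⟨r + (a : ℕ), hrowlt⟩ with hirow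
  -- inputs agree on rows ≤ irow
  have hinput : ∀ i' ≤ irow, stack P (P * Y) i' = X0 i' := by
    rintro ⟨v, hv⟩ hi'
    have hi'' : v ≤ r + (a : ℕ) := hi'
    by_cases hvn : v < n
    · have e : (⟨v, hv⟩ : Fin (n + n)) = Fin.castAdd n ⟨v, hvn⟩ := rfl
      rw [hX0, e, stack_left, stack_left]
    · have hvsub : n + (v - n) = v := by omega
      have e : (⟨v, hv⟩ : Fin (n + n)) = Fin.natAdd n ⟨v - n, by omega⟩ := by
        apply Fin.ext
        simp only [Fin.natAdd_mk]
        omega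
      rw [hX0, e, stack_right, stack_right]
      funext j
      have hne : π ⟨v - n, by omega⟩ ≠ a := by
        intro hpe
        have : (⟨v - n, by omega⟩ : Fin n) = c₀ := π.injective (by rw [hpe, ha])
        have hvc : v - n = (c₀ : ℕ) := by
          simpa using congrArg Fin.val this
        have hac : (a : ℕ) < (c₀ : ℕ) := hdesc
        omega
      rw [permMatrix_mul_apply, permMatrix_mul_apply]
      simp [hY, hne]
  -- the residual rows at irow agree
  have hrow := resid_causal (stack P (P * Y)) X0 A k irow hinput irow le_rfl
  -- evaluate the block at (a, 0)
  have hb := hblock a ⟨0, hn⟩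
  have hYa : Y a ⟨0, hn⟩ = t := by simp [hY]
  rw [hYa] at hb
  have hcol : (⟨cc + (⟨0, hn⟩ : Fin n).val, by have := (⟨0, hn⟩ : Fin n).isLt; omega⟩ :
      Fin (dwidth n (n + n) k)) = ⟨cc, by omega⟩ := by
    apply Fin.ext; simp
  have hidx : (⟨r + (a : ℕ), by have := a.isLt; omega⟩ : Fin (n + n)) = irow := rfl
  rw [hidx, hcol] at hb
  rw [hrow] at hb
  exact ht (Finset.mem_image.mpr ⟨(irow, ⟨cc, by omega⟩), Finset.mem_univ _, hb⟩)
end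

section
/- With causal mask-free attention and weight matrix A^{(1)} = β·B where B has identity block I_n in block position (3,2) and zeros elsewhere (blocks indexed over [token | pos-P | pos-Y_P]), the pre-activation X A^{(1)} Xᵀ for input X = [[P, I, 0],[Y_P, 0, I]] equals β·[[0,0],[I_n,0]], and as β → ∞ the softmax activations converge to [[(1/2n)𝟙𝟙ᵀ, (1/2n)𝟙𝟙ᵀ],[I_n, 0]]; hence the bottom block-row of the layer-1 output equals P. -/
open Matrix Filter

noncomputable def rowSoftmax {T m : ℕ} (M : Matrix (Fin T) (Fin m) ℝ) :
    Matrix (Fin T) (Fin m) ℝ :=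
  Matrix.of fun i j => Real.exp (M i j) / ∑ k : Fin m, Real.exp (M i k)

/-- The embedded input `X = [[P, I, 0], [Y_P, 0, I]] ∈ ℝ^{2n × 3n}`. -/
def embIn {n : ℕ} (P YP : Matrix (Fin n) (Fin n) ℝ) :
    Matrix (Fin (n + n)) (Fin (n + (n + n))) ℝ :=
  Matrix.of fun i =>
    Fin.addCases (motive := fun _ => Fin (n + (n + n)) → ℝ)
      (fun i₁ => Fin.append (P i₁)
        (Fin.append (fun j : Fin n => if i₁ = j then (1 : ℝ) else 0) (fun _ : Fin n => 0)))
      (fun i₂ => Fin.append (YP i₂)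
        (Fin.append (fun _ : Fin n => (0 : ℝ)) (fun j : Fin n => if i₂ = j then 1 else 0))) i

/-- The block weight matrix `B` with identity block in block position (3,2)
(blocks indexed over [token | pos-P | pos-Y_P]) and zeros elsewhere. -/
def Bmat (n : ℕ) : Matrix (Fin (n + (n + n))) (Fin (n + (n + n))) ℝ :=
  Matrix.of fun i j => if 2 * n ≤ i.val ∧ i.val = j.val + n then 1 else 0

/-- The block matrix `[[0, 0], [I_n, 0]] ∈ ℝ^{2n × 2n}`. -/
def Dmat (n : ℕ) : Matrix (Fin (n + n)) (Fin (n + n)) ℝ :=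
  Matrix.of fun i j => if n ≤ i.val ∧ i.val = j.val + n then 1 else 0

lemma embIn_left {n : ℕ} (A C : Matrix (Fin n) (Fin n) ℝ) (i : Fin n) (j : Fin (n + (n + n))) :
    embIn A C (Fin.castAdd n i) j =
      Fin.append (A i) (Fin.append (fun j : Fin n => if i = j then (1:ℝ) else 0) (fun _ : Fin n => (0:ℝ))) j := by
  simp [embIn]

lemma embIn_right {n : ℕ} (A C : Matrix (Fin n) (Fin n) ℝ) (i : Fin n) (j : Fin (n + (n + n))) :
    embIn A C (Fin.natAdd n i) j =
      Fin.append (C i) (Fin.append (fun _ : Fin n => (0:ℝ)) (fun j : Fin n => if i = j then (1:ℝ) else 0)) j := by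
  simp only [embIn, Matrix.of_apply, Fin.addCases_right]

lemma mulB {n T : ℕ} (M : Matrix (Fin T) (Fin (n + (n + n))) ℝ) (i : Fin T) (k : Fin (n + (n + n))) :
    (M * Bmat n) i k = if h : n ≤ k.val ∧ k.val < n + n then M i ⟨k.val + n, by omega⟩ else 0 := by
  rw [Matrix.mul_apply]
  split
  · next h =>
    rw [Finset.sum_eq_single (⟨k.val + n, by omega⟩ : Fin (n + (n + n)))]
    · simp only [Bmat, Matrix.of_apply]
      rw [if_pos ⟨by omega, trivial⟩, mul_one]
    · intro l _ hl
      have : ¬(2 * n ≤ l.val ∧ l.val = k.val + n) := by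
        rintro ⟨h1, h2⟩; exact hl (Fin.ext h2)
      simp [Bmat, this]
    · simp
  · next h =>
    apply Finset.sum_eq_zero
    intro l _
    have hl := l.isLt
    have hk := k.isLt
    have : ¬(2 * n ≤ l.val ∧ l.val = k.val + n) := by omega
    simp [Bmat, this]

example {n : ℕ} (i : Fin (n + n)) : True := by
  induction i using Fin.addCases with
  | left i₁ => trivial
  | right i₂ => trivial


lemma preact {n : ℕ} (A C : Matrix (Fin n) (Fin n) ℝ) :
    embIn A C * Bmat n * (embIn A C)ᵀ = Dmat n := by
  ext i j
  rw [Matrix.mul_apply]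
  simp only [transpose_apply, mulB]
  rw [Fin.sum_univ_add]
  have h1 : ∑ k₁ : Fin n,
      (if h : n ≤ (Fin.castAdd (n + n) k₁).val ∧ (Fin.castAdd (n + n) k₁).val < n + n then
        embIn A C i ⟨(Fin.castAdd (n + n) k₁).val + n, by omega⟩ else 0) * embIn A C j (Fin.castAdd (n + n) k₁) = 0 := by
    apply Finset.sum_eq_zero
    intro k₁ _
    rw [dif_neg (by simp), zero_mul]
  rw [h1, zero_add, Fin.sum_univ_add]
  have h3 : ∑ k₃ : Fin n,
      (if h : n ≤ (Fin.natAdd n (Fin.natAdd n k₃)).val ∧ (Fin.natAdd n (Fin.natAdd n k₃)).val < n + n then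
        embIn A C i ⟨(Fin.natAdd n (Fin.natAdd n k₃)).val + n, by omega⟩ else 0) * embIn A C j (Fin.natAdd n (Fin.natAdd n k₃)) = 0 := by
    apply Finset.sum_eq_zero
    intro k₃ _
    rw [dif_neg (by simp), zero_mul]
  rw [h3, add_zero]
  have h2 : ∀ k₂ : Fin n,
      (if h : n ≤ (Fin.natAdd n (Fin.castAdd n k₂)).val ∧ (Fin.natAdd n (Fin.castAdd n k₂)).val < n + n then
        embIn A C i ⟨(Fin.natAdd n (Fin.castAdd n k₂)).val + n, by omega⟩ else 0)
      = embIn A C i (Fin.natAdd n (Fin.natAdd n k₂)) := by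
    intro k₂
    have hk := k₂.isLt
    rw [dif_pos ⟨by simp, by simp only [Fin.coe_natAdd, Fin.coe_castAdd]; omega⟩]
    congr 1
    ext
    simp only [Fin.coe_natAdd, Fin.coe_castAdd]
    omega
  simp only [h2]
  induction i using Fin.addCases with
  | left i₁ =>
    have : ∀ k₂ : Fin n, embIn A C (Fin.castAdd n i₁) (Fin.natAdd n (Fin.natAdd n k₂)) = 0 := by
      intro k₂
      rw [embIn_left, Fin.append_right, Fin.append_right]
    simp only [this, zero_mul, Finset.sum_const_zero]
    have h4 : ¬(n ≤ i₁.val ∧ i₁.val = j.val + n) := by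
      have := i₁.isLt; omega
    simp [Dmat, h4]
  | right i₂ =>
    have key : ∀ k₂ : Fin n, embIn A C (Fin.natAdd n i₂) (Fin.natAdd n (Fin.natAdd n k₂))
        = if i₂ = k₂ then 1 else 0 := by
      intro k₂
      rw [embIn_right, Fin.append_right, Fin.append_right]
    simp only [key, ite_mul, one_mul, zero_mul]
    rw [Finset.sum_ite_eq]
    simp only [Finset.mem_univ, if_pos]
    induction j using Fin.addCases with
    | left j₁ =>
      rw [embIn_left, Fin.append_right, Fin.append_left]
      simp only [Dmat, Matrix.of_apply, Fin.coe_natAdd, Fin.coe_castAdd]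
      by_cases h : j₁ = i₂
      · subst h; rw [if_pos rfl, if_pos ⟨by omega, by omega⟩]
      · rw [if_neg h, if_neg]
        rintro ⟨-, h2⟩
        exact h (Fin.ext (by omega))
    | right j₂ =>
      rw [embIn_right, Fin.append_right, Fin.append_left]
      have h4 : ¬(n ≤ (Fin.natAdd n i₂).val ∧ (Fin.natAdd n i₂).val = (Fin.natAdd n j₂).val + n) := by
        simp only [Fin.coe_natAdd]; have := i₂.isLt; omega
      simp only [Fin.coe_natAdd] at h4
      simp only [Dmat, Matrix.of_apply, Fin.coe_natAdd]
      rw [if_neg (by have := i₂.isLt; omega)]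


lemma softmax_tendsto {n : ℕ} (i j : Fin (n + n)) :
    Tendsto (fun β : ℝ => rowSoftmax (β • Dmat n) i j) atTop
      (nhds (if n ≤ i.val then (if i.val = j.val + n then 1 else 0) else 1 / (2 * n))) := by
  have hn : 0 < n := by have := i.isLt; omega
  by_cases hi : n ≤ i.val
  · -- bottom rows
    set k₀ : Fin (n + n) := ⟨i.val - n, by have := i.isLt; omega⟩ with hk₀
    have hD : ∀ k : Fin (n + n), Dmat n i k = if k = k₀ then 1 else 0 := by
      intro k
      by_cases hk : k = k₀
      · subst hk
        simp only [Dmat, Matrix.of_apply]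
        rw [if_pos ⟨hi, by show i.val = i.val - n + n; omega⟩]
        simp
      · simp only [Dmat, Matrix.of_apply]
        rw [if_neg, if_neg hk]
        rintro ⟨-, h2⟩
        exact hk (Fin.ext (by show k.val = i.val - n; omega))
    set c : ℝ := ((n + n - 1 : ℕ) : ℝ) with hc
    have hc0 : 0 ≤ c := Nat.cast_nonneg _
    have hsum : ∀ β : ℝ, ∑ k : Fin (n + n), Real.exp ((β • Dmat n) i k) = Real.exp β + c := by
      intro β
      rw [← Finset.add_sum_erase Finset.univ _ (Finset.mem_univ k₀)]
      have h1 : (β • Dmat n) i k₀ = β := by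
        simp [Matrix.smul_apply, hD, smul_eq_mul]
      rw [h1]
      congr 1
      have h2 : ∀ k ∈ Finset.univ.erase k₀, Real.exp ((β • Dmat n) i k) = 1 := by
        intro k hk
        have : k ≠ k₀ := Finset.ne_of_mem_erase hk
        simp [Matrix.smul_apply, hD, this]
      rw [Finset.sum_congr rfl h2, Finset.sum_const, nsmul_eq_mul, mul_one,
        Finset.card_erase_of_mem (Finset.mem_univ _), Finset.card_univ, Fintype.card_fin]
    have hne : ∀ β : ℝ, Real.exp β + c ≠ 0 := fun β =>
      ne_of_gt (by have := Real.exp_pos β; linarith)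
    have hden : Tendsto (fun β : ℝ => Real.exp β + c) atTop atTop :=
      tendsto_atTop_add_const_right _ c Real.tendsto_exp_atTop
    rw [if_pos hi]
    by_cases hj : i.val = j.val + n
    · have hjk : j = k₀ := Fin.ext (by simp [hk₀]; omega)
      have heq : ∀ β : ℝ, rowSoftmax (β • Dmat n) i j = 1 - c / (Real.exp β + c) := by
        intro β
        simp only [rowSoftmax, Matrix.of_apply, hsum]
        rw [hjk]
        have h1 : (β • Dmat n) i k₀ = β := by simp [Matrix.smul_apply, hD, smul_eq_mul]
        rw [h1]
        field_simp
        ring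
      rw [if_pos hj]
      have h0 : Tendsto (fun β : ℝ => c / (Real.exp β + c)) atTop (nhds 0) :=
        Tendsto.div_atTop tendsto_const_nhds hden
      have := (tendsto_const_nhds (α := ℝ) (x := (1:ℝ)) (f := atTop)).sub h0
      rw [sub_zero] at this
      exact Tendsto.congr (fun β => (heq β).symm) this
    · have heq : ∀ β : ℝ, rowSoftmax (β • Dmat n) i j = 1 / (Real.exp β + c) := by
        intro β
        simp only [rowSoftmax, Matrix.of_apply, hsum]
        have hjk : j ≠ k₀ := fun h => hj (by rw [h]; show i.val = i.val - n + n; omega)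
        have h1 : (β • Dmat n) i j = 0 := by simp [Matrix.smul_apply, hD, hjk]
        rw [h1, Real.exp_zero]
      rw [if_neg hj]
      have h0 : Tendsto (fun β : ℝ => 1 / (Real.exp β + c)) atTop (nhds 0) :=
        Tendsto.div_atTop tendsto_const_nhds hden
      exact Tendsto.congr (fun β => (heq β).symm) h0
  · -- top rows: all entries zero
    have hD : ∀ k : Fin (n + n), Dmat n i k = 0 := by
      intro k
      simp only [Dmat, Matrix.of_apply]
      rw [if_neg (by omega)]
    have heq : ∀ β : ℝ, rowSoftmax (β • Dmat n) i j = 1 / (2 * n) := by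
      intro β
      simp only [rowSoftmax, Matrix.of_apply, Matrix.smul_apply, hD, smul_eq_mul, mul_zero,
        Real.exp_zero, Finset.sum_const, Finset.card_univ, Fintype.card_fin, nsmul_eq_mul,
        mul_one]
      push_cast
      ring_nf
    rw [if_neg hi]
    exact Tendsto.congr (fun β => (heq β).symm) tendsto_const_nhds

/-- With CMF attention and `A¹ = β·B` (`B` having identity block `I_n` in block position
(3,2)), the pre-activation equals `β·[[0,0],[I_n,0]]`; as `β → ∞` the softmax activations
converge to `[[(1/2n)𝟙𝟙ᵀ, (1/2n)𝟙𝟙ᵀ], [I_n, 0]]`; hence the bottom block-row of the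
layer-1 output equals `P`. -/
theorem stmt11 {n : ℕ} (π : Equiv.Perm (Fin n)) (Y : Matrix (Fin n) (Fin n) ℝ) :
    let P := permMatrix π
    let X := embIn P (P * Y)
    (∀ β : ℝ, X * (β • Bmat n) * Xᵀ = β • Dmat n) ∧
    (∀ i j : Fin (n + n),
      Tendsto (fun β : ℝ => rowSoftmax (X * (β • Bmat n) * Xᵀ) i j) atTop
        (nhds (if n ≤ i.val then (if i.val = j.val + n then 1 else 0) else 1 / (2 * n)))) ∧
    (∀ i j : Fin n,
      Tendsto
        (fun β : ℝ => (rowSoftmax (X * (β • Bmat n) * Xᵀ) * X)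
          ⟨n + i.val, by have := i.isLt; omega⟩ (Fin.castAdd (n + n) j))
        atTop (nhds (P i j))) := by
  intro P X
  have h1 : ∀ β : ℝ, X * (β • Bmat n) * Xᵀ = β • Dmat n := by
    intro β
    rw [Matrix.mul_smul, Matrix.smul_mul, preact]
  have h2 : ∀ i j : Fin (n + n),
      Tendsto (fun β : ℝ => rowSoftmax (X * (β • Bmat n) * Xᵀ) i j) atTop
        (nhds (if n ≤ i.val then (if i.val = j.val + n then 1 else 0) else 1 / (2 * n))) := by
    intro i j
    simp only [h1]
    exact softmax_tendsto i j
  refine ⟨h1, h2, ?_⟩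
  intro i j
  set r : Fin (n + n) := ⟨n + i.val, by have := i.isLt; omega⟩ with hr
  have hterm : ∀ k : Fin (n + n),
      Tendsto (fun β : ℝ => rowSoftmax (X * (β • Bmat n) * Xᵀ) r k * X k (Fin.castAdd (n + n) j))
        atTop (nhds ((if r.val = k.val + n then (1:ℝ) else 0) * X k (Fin.castAdd (n + n) j))) := by
    intro k
    have h := h2 r k
    rw [if_pos (show n ≤ r.val from Nat.le_add_right n i.val)] at h
    exact h.mul_const _
  have hsum := tendsto_finset_sum Finset.univ (fun k (_ : k ∈ Finset.univ) => hterm k)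
  have hval : ∑ k : Fin (n + n), (if r.val = k.val + n then (1:ℝ) else 0) * X k (Fin.castAdd (n + n) j)
      = P i j := by
    rw [Finset.sum_eq_single (Fin.castAdd n i)]
    · rw [if_pos (show r.val = (Fin.castAdd n i).val + n from by
        show n + i.val = i.val + n; omega), one_mul]
      show embIn P (P * Y) (Fin.castAdd n i) (Fin.castAdd (n + n) j) = P i j
      rw [embIn_left, Fin.append_left]
    · intro k _ hk
      rw [if_neg, zero_mul]
      intro h
      have h' : n + i.val = k.val + n := h
      exact hk (Fin.ext (by rw [Fin.coe_castAdd]; omega))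
    · simp
  rw [hval] at hsum
  exact Tendsto.congr (fun β => (Matrix.mul_apply).symm) hsum
end

section
/- For a block pre-activation matrix over 2n rows of the form [[C, β·Pᵀ],[0, 0]] where every entry of C lies in [0, 1) and P is an n×n permutation matrix, the full (unmasked) row-wise softmax converges as β → ∞ to [[0, Pᵀ],[(1/2n)𝟙𝟙ᵀ, (1/2n)𝟙𝟙ᵀ]]. -/
open Matrix Filter

/-- The block matrix `[[C, β·Pᵀ], [0, 0]] ∈ ℝ^{2n × 2n}`. -/
noncomputable def blockPre {n : ℕ} (C : Matrix (Fin n) (Fin n) ℝ)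
    (P : Matrix (Fin n) (Fin n) ℝ) (β : ℝ) : Matrix (Fin (n + n)) (Fin (n + n)) ℝ :=
  Matrix.of fun i j =>
    Fin.addCases (motive := fun _ => ℝ)
      (fun i₁ =>
        Fin.addCases (motive := fun _ => ℝ) (fun j₁ => C i₁ j₁) (fun j₂ => β * Pᵀ i₁ j₂) j)
      (fun _ => 0) i

/-- The limit matrix `[[0, Pᵀ], [(1/2n)𝟙𝟙ᵀ, (1/2n)𝟙𝟙ᵀ]]`. -/
noncomputable def blockLim {n : ℕ} (P : Matrix (Fin n) (Fin n) ℝ) :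
    Matrix (Fin (n + n)) (Fin (n + n)) ℝ :=
  Matrix.of fun i j =>
    Fin.addCases (motive := fun _ => ℝ)
      (fun i₁ => Fin.addCases (motive := fun _ => ℝ) (fun _ => 0) (fun j₂ => Pᵀ i₁ j₂) j)
      (fun _ => 1 / (2 * n)) i

/-- For a block pre-activation `[[C, β·Pᵀ],[0,0]]` with all entries of `C` in `[0,1)` and
`P` a permutation matrix, the full (unmasked) row-wise softmax converges as `β → ∞` to
`[[0, Pᵀ],[(1/2n)𝟙𝟙ᵀ, (1/2n)𝟙𝟙ᵀ]]`. -/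
theorem stmt18 {n : ℕ} (π : Equiv.Perm (Fin n)) (C : Matrix (Fin n) (Fin n) ℝ)
    (hC : ∀ i j, 0 ≤ C i j ∧ C i j < 1) :
    ∀ i j : Fin (n + n),
      Tendsto (fun β : ℝ => rowSoftmax (blockPre C (permMatrix π) β) i j) atTop
        (nhds (blockLim (permMatrix π) i j)) := by
  intro i j
  have hn : 0 < n := by
    by_contra h
    push_neg at h
    interval_cases n
    exact i.elim0
  unfold rowSoftmax blockPre blockLim
  simp only [Matrix.of_apply]
  induction i using Fin.addCases with
  | left i₁ =>
    simp only [Fin.addCases_left]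
    set a := π.symm i₁ with ha
    have hsum : ∀ β : ℝ, (∑ k : Fin (n + n), Real.exp
        (Fin.addCases (motive := fun _ => ℝ) (fun k₁ => C i₁ k₁)
          (fun k₂ => β * (permMatrix π)ᵀ i₁ k₂) k))
        = ((∑ k₁ : Fin n, Real.exp (C i₁ k₁)) + ((n : ℝ) - 1)) + Real.exp β := by
      intro β
      rw [Fin.sum_univ_add]
      simp only [Fin.addCases_left, Fin.addCases_right]
      have h2 : ∀ k₂ : Fin n, Real.exp (β * (permMatrix π)ᵀ i₁ k₂)
          = 1 + (if k₂ = a then Real.exp β - 1 else 0) := by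
        intro k₂
        simp only [Matrix.transpose_apply, permMatrix, Matrix.of_apply]
        by_cases h : k₂ = a
        · have : π k₂ = i₁ := by rw [h, ha]; simp
          rw [if_pos this, if_pos h, mul_one]; ring
        · have : ¬ (π k₂ = i₁) := by
            intro hc; exact h (by rw [ha, ← hc]; simp)
          rw [if_neg this, if_neg h, mul_zero, Real.exp_zero]; ring
      rw [Finset.sum_congr rfl (fun k₂ _ => h2 k₂)]
      rw [Finset.sum_add_distrib, Finset.sum_ite_eq' Finset.univ a]
      simp
      ring
    have hApos : (0:ℝ) < (∑ k₁ : Fin n, Real.exp (C i₁ k₁)) + ((n : ℝ) - 1) := by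
      have h1 : (n : ℝ) ≤ ∑ k₁ : Fin n, Real.exp (C i₁ k₁) := by
        calc (n : ℝ) = ∑ _k₁ : Fin n, (1:ℝ) := by simp
        _ ≤ _ := Finset.sum_le_sum fun k _ => by
            have := (hC i₁ k).1
            nlinarith [Real.add_one_le_exp (C i₁ k)]
      have : (1:ℝ) ≤ (n:ℝ) := by exact_mod_cast hn
      linarith
    set A := (∑ k₁ : Fin n, Real.exp (C i₁ k₁)) + ((n : ℝ) - 1) with hA
    have hdenom : Tendsto (fun β : ℝ => A + Real.exp β) atTop atTop :=
      tendsto_atTop_add_const_left atTop A Real.tendsto_exp_atTop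
    induction j using Fin.addCases with
    | left j₁ =>
      simp only [Fin.addCases_left]
      simp only [hsum]
      exact Tendsto.div_atTop tendsto_const_nhds hdenom
    | right j₂ =>
      simp only [Fin.addCases_right]
      by_cases h : j₂ = a
      · have hP : (permMatrix π)ᵀ i₁ j₂ = 1 := by
          simp only [Matrix.transpose_apply, permMatrix, Matrix.of_apply]
          have : π j₂ = i₁ := by rw [h, ha]; simp
          simp [this]
        simp only [hsum, hP, mul_one]
        have key : ∀ β : ℝ, 1 - A / (A + Real.exp β) = Real.exp β / (A + Real.exp β) := by
          intro β
          have hne : A + Real.exp β ≠ 0 := by positivity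
          field_simp
          ring
        rw [show (1:ℝ) = 1 - 0 by ring]
        exact Tendsto.congr key
          (tendsto_const_nhds.sub (Tendsto.div_atTop tendsto_const_nhds hdenom))
      · have hP : (permMatrix π)ᵀ i₁ j₂ = 0 := by
          simp only [Matrix.transpose_apply, permMatrix, Matrix.of_apply]
          have : ¬ (π j₂ = i₁) := by
            intro hc; exact h (by rw [ha, ← hc]; simp)
          simp [this]
        simp only [hsum, hP, mul_zero]
        exact Tendsto.div_atTop tendsto_const_nhds hdenom
  | right i₂ =>
    simp only [Fin.addCases_right, Real.exp_zero, Finset.sum_const, Finset.card_univ,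
      Fintype.card_fin, nsmul_eq_mul, mul_one]
    have : (1:ℝ) / ((n:ℝ) + n) = 1 / (2 * n) := by ring
    rw [show (1:ℝ) / (2 * (n:ℝ)) = 1 / ((n:ℝ) + n) by ring]
    refine tendsto_const_nhds.congr fun β => ?_
    push_cast
    ring
end
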